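/- arXiv:quant-ph/0607011 — 2 statements merged into one kernel-verified Lean document; each statement's English description precedes it below -/
import Mathlib

section
/- Let ρ_1, …, ρ_n be d×d positive semidefinite complex matrices, let p_1, …, p_n be nonnegative reals, and suppose ρ = ∑_{i=1}^{n} p_i ρ_i is positive definite. For each i let {v_{i1}, …, v_{id}} be an orthonormal basis of ℂ^d and λ_{i1}, …, λ_{id} ≥ 0 be such that ρ_i = ∑_{k=1}^{d} λ_{ik} v_{ik} v_{ik}ᴴ (a spectral decomposition). Then ∑_{i=1}^{n} tr( ρ^{−1/2} (p_i ρ_i) ρ^{−1/2} (p_i ρ_i) ) ≥ ∑_{i=1}^{n} ∑_{k=1}^{d} (p_i λ_{ik})² · (⟨v_{ik}, ρ^{−1/2} v_{ik}⟩)². -/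
open Matrix
open scoped ComplexOrder

/-- The square root of a positive semidefinite matrix (removed from Mathlib; old definition). -/
noncomputable def Matrix.PosSemidef.sqrt {n : Type*} [Fintype n] [DecidableEq n] {𝕜 : Type*} [RCLike 𝕜]
    {A : Matrix n n 𝕜} (hA : A.PosSemidef) : Matrix n n 𝕜 :=
  hA.1.eigenvectorUnitary.1 * diagonal ((↑) ∘ (√·) ∘ hA.1.eigenvalues) *
    (star hA.1.eigenvectorUnitary : Matrix n n 𝕜)

private lemma sqrt_conjTranspose' {d : ℕ} {A : Matrix (Fin d) (Fin d) ℂ} (hA : A.PosSemidef) :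
    (hA.sqrt)ᴴ = hA.sqrt := by
  unfold Matrix.PosSemidef.sqrt
  simp only [conjTranspose_mul, star_eq_conjTranspose, conjTranspose_conjTranspose,
    diagonal_conjTranspose, Matrix.mul_assoc]
  congr 2
  ext i j
  simp [diagonal_apply]

private lemma mul_vecMulVec' {d : ℕ} (M : Matrix (Fin d) (Fin d) ℂ) (a b : Fin d → ℂ) :
    M * vecMulVec a b = vecMulVec (M *ᵥ a) b := by
  ext i j
  simp [Matrix.mul_apply, vecMulVec_apply, Matrix.mulVec, dotProduct, Finset.sum_mul, mul_assoc]

private lemma vecMulVec_mul_vecMulVec' {d : ℕ} (a b c e : Fin d → ℂ) :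
    vecMulVec a b * vecMulVec c e = (b ⬝ᵥ c) • vecMulVec a e := by
  ext i j
  simp only [Matrix.mul_apply, vecMulVec_apply, dotProduct, Matrix.smul_apply,
    smul_eq_mul, Finset.sum_mul]
  exact Finset.sum_congr rfl fun m _ => by ring

private lemma vecMulVec_mul' {d : ℕ} (M : Matrix (Fin d) (Fin d) ℂ) (a b : Fin d → ℂ) :
    vecMulVec a b * M = vecMulVec a (b ᵥ* M) := by
  ext i j
  simp [Matrix.mul_apply, vecMulVec_apply, Matrix.vecMul, dotProduct, Finset.mul_sum, mul_assoc]

private lemma trace_vecMulVec' {d : ℕ} (a b : Fin d → ℂ) :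
    (vecMulVec a b).trace = b ⬝ᵥ a := by
  simp [Matrix.trace, Matrix.diag, vecMulVec_apply, dotProduct, mul_comm]

theorem stmt_8 (n d : ℕ) (ρi : Fin n → Matrix (Fin d) (Fin d) ℂ)
    (hρi : ∀ i, (ρi i).PosSemidef)
    (p : Fin n → ℝ) (hp : ∀ i, 0 ≤ p i)
    (v : Fin n → Fin d → (Fin d → ℂ))
    (hortho : ∀ i k l, star (v i k) ⬝ᵥ v i l = if k = l then 1 else 0)
    (lam : Fin n → Fin d → ℝ) (hlam : ∀ i k, 0 ≤ lam i k)
    (hspec : ∀ i, ρi i = ∑ k, (lam i k : ℂ) • Matrix.vecMulVec (v i k) (star (v i k)))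
    (ρ : Matrix (Fin d) (Fin d) ℂ) (hρdef : ρ = ∑ i, (p i : ℂ) • ρi i)
    (hρ : ρ.PosDef) :
    ∑ i, ∑ k, (p i * lam i k) ^ 2 *
        ((star (v i k) ⬝ᵥ ((hρ.posSemidef.sqrt)⁻¹ *ᵥ v i k)).re) ^ 2 ≤
      ∑ i, (((hρ.posSemidef.sqrt)⁻¹ * ((p i : ℂ) • ρi i) * (hρ.posSemidef.sqrt)⁻¹ *
        ((p i : ℂ) • ρi i)).trace).re := by
  set σ : Matrix (Fin d) (Fin d) ℂ := (hρ.posSemidef.sqrt)⁻¹ with hσdef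
  have hσher : σᴴ = σ := by
    rw [hσdef, Matrix.conjTranspose_nonsing_inv, sqrt_conjTranspose' hρ.posSemidef]
  apply Finset.sum_le_sum
  intro i _
  -- notation
  set c : Fin d → Fin d → ℂ := fun k l => star (v i k) ⬝ᵥ (σ *ᵥ v i l) with hc
  have hconj : ∀ k l, c l k = star (c k l) := by
    intro k l
    rw [hc]
    simp only
    rw [star_dotProduct]
    exact congrArg star (by rw [star_mulVec, hσher, ← dotProduct_mulVec])
  -- the decomposition of `(p i : ℂ) • ρi i`
  have hA : (p i : ℂ) • ρi i
      = ∑ k, ((p i * lam i k : ℝ) : ℂ) • vecMulVec (v i k) (star (v i k)) := by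
    rw [hspec i, Finset.smul_sum]
    refine Finset.sum_congr rfl fun k _ => ?_
    rw [smul_smul]
    push_cast
    ring_nf
  -- trace expansion
  have hterm : ∀ k l : Fin d,
      (σ * vecMulVec (v i k) (star (v i k)) * σ * vecMulVec (v i l) (star (v i l))).trace
        = c k l * c l k := by
    intro k l
    rw [mul_vecMulVec' σ (v i k) (star (v i k)), vecMulVec_mul', vecMulVec_mul_vecMulVec',
      Matrix.trace_smul, trace_vecMulVec', smul_eq_mul, ← dotProduct_mulVec]
  have key : (σ * ((p i : ℂ) • ρi i) * σ * ((p i : ℂ) • ρi i)).trace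
      = ∑ k, ∑ l, ((p i * lam i k : ℝ) : ℂ) * ((p i * lam i l : ℝ) : ℂ)
          * (c k l * c l k) := by
    rw [hA]
    simp only [Matrix.mul_sum, Matrix.sum_mul, Matrix.mul_smul, Matrix.smul_mul,
      Matrix.trace_sum, Matrix.trace_smul, smul_eq_mul, smul_smul, Finset.mul_sum]
    rw [Finset.sum_comm]
    refine Finset.sum_congr rfl fun k _ => Finset.sum_congr rfl fun l _ => ?_
    rw [hterm k l]
    ring
  rw [key]
  have hre : (∑ k, ∑ l, ((p i * lam i k : ℝ) : ℂ) * ((p i * lam i l : ℝ) : ℂ)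
      * (c k l * c l k)).re
      = ∑ k, ∑ l, (p i * lam i k) * (p i * lam i l) * Complex.normSq (c k l) := by
    rw [Complex.re_sum]
    refine Finset.sum_congr rfl fun k _ => ?_
    rw [Complex.re_sum]
    refine Finset.sum_congr rfl fun l _ => ?_
    rw [hconj k l]
    have : c k l * star (c k l) = ((Complex.normSq (c k l) : ℝ) : ℂ) :=
      Complex.mul_conj (c k l)
    rw [this]
    push_cast
    simp
  rw [hre]
  have hnn : ∀ k l : Fin d,
      0 ≤ (p i * lam i k) * (p i * lam i l) * Complex.normSq (c k l) := fun k l =>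
    mul_nonneg (mul_nonneg (mul_nonneg (hp i) (hlam i k)) (mul_nonneg (hp i) (hlam i l)))
      (Complex.normSq_nonneg _)
  apply Finset.sum_le_sum
  intro k _
  calc (p i * lam i k) ^ 2 * (c k k).re ^ 2
      ≤ (p i * lam i k) * (p i * lam i k) * Complex.normSq (c k k) := by
        rw [sq, sq]
        apply mul_le_mul_of_nonneg_left _ (mul_nonneg (mul_nonneg (hp i) (hlam i k))
          (mul_nonneg (hp i) (hlam i k)))
        rw [Complex.normSq_apply]
        nlinarith [sq_nonneg (c k k).im]
    _ ≤ ∑ l, (p i * lam i k) * (p i * lam i l) * Complex.normSq (c k l) :=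
        Finset.single_le_sum (fun l _ => hnn k l) (Finset.mem_univ k)
end

section
/- Let ρ_1 = diag(1/2, 1/2, 0) and ρ_2 = diag(1/2, 0, 1/2) be 3×3 real diagonal matrices, taken with equal a priori probabilities p_1 = p_2 = 1/2, and let ρ = (ρ_1 + ρ_2)/2. Then ∑_{i=1}^{2} tr( ρ^{−1/2} (ρ_i/2) ρ^{−1/2} (ρ_i/2) ) = 3/4, while ∑_{i=1}^{2} (1/4) / ( ∑_{j=1}^{2} (1/2)·F(ρ_i, ρ_j) ) = 4/5; in particular the pretty good measurement success probability is strictly smaller than ∑_i p_i² / (∑_j p_j F(ρ_i, ρ_j)), so this expression is not a valid lower bound for mixed-state ensembles. -/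
open Matrix
open scoped ComplexOrder

theorem Matrix.PosSemidef.posSemidef_sqrt {n : Type*} [Fintype n] [DecidableEq n] {𝕜 : Type*} [RCLike 𝕜]
    {A : Matrix n n 𝕜} (hA : A.PosSemidef) : hA.sqrt.PosSemidef := by
  unfold Matrix.PosSemidef.sqrt
  refine PosSemidef.mul_mul_conjTranspose_same ?_ _
  refine posSemidef_diagonal_iff.2 fun i => ?_
  simp only [Function.comp_apply, RCLike.ofReal_nonneg]
  exact Real.sqrt_nonneg _

/-- `√ρ * σ * √ρ` is positive semidefinite when `ρ` and `σ` are. -/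
theorem sqrt_mul_mul_sqrt_posSemidef {d : ℕ} {ρ σ : Matrix (Fin d) (Fin d) ℂ}
    (hρ : ρ.PosSemidef) (hσ : σ.PosSemidef) : (hρ.sqrt * σ * hρ.sqrt).PosSemidef := by
  have h := hσ.mul_mul_conjTranspose_same hρ.sqrt
  rwa [hρ.posSemidef_sqrt.1.eq] at h

/-- The fidelity `F(ρ, σ) = (tr √(√ρ σ √ρ))²` of two positive semidefinite matrices. -/
noncomputable def fid {d : ℕ} {ρ σ : Matrix (Fin d) (Fin d) ℂ}
    (hρ : ρ.PosSemidef) (hσ : σ.PosSemidef) : ℝ :=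
  (((sqrt_mul_mul_sqrt_posSemidef hρ hσ).sqrt.trace).re) ^ 2

lemma sqrt_eq_diagonal' {A : Matrix (Fin 3) (Fin 3) ℂ} (h : A.PosSemidef)
    (v w : Fin 3 → ℂ) (hA : A = diagonal v) (hw : 0 ≤ w)
    (hsq : ∀ i, w i * w i = v i) : h.sqrt = diagonal w := by
  open scoped MatrixOrder in
  have e : h.sqrt = CFC.sqrt A := by
    rw [CFC.sqrt_eq_cfc, cfc_nnreal_eq_real _ A (ha := h.nonneg), h.1.cfc_eq]
    unfold Matrix.PosSemidef.sqrt IsHermitian.cfc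
    congr 3
    funext i
    simp [max_eq_left (h.eigenvalues_nonneg i)]
  open scoped MatrixOrder in
  rw [e]
  open scoped MatrixOrder in
  refine CFC.sqrt_unique ?_ (Matrix.PosSemidef.diagonal hw).nonneg
  rw [hA, diagonal_mul_diagonal]
  exact congrArg diagonal (funext hsq)

lemma cnn' (r : ℝ) (h : 0 ≤ r) : (0:ℂ) ≤ (r:ℂ) := Complex.zero_le_real.mpr h

theorem stmt_10 (ρ1 ρ2 ρ : Matrix (Fin 3) (Fin 3) ℂ)
    (hρ1def : ρ1 = Matrix.diagonal ![1/2, 1/2, 0])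
    (hρ2def : ρ2 = Matrix.diagonal ![1/2, 0, 1/2])
    (hρdef : ρ = (1/2 : ℂ) • (ρ1 + ρ2))
    (hρ1 : ρ1.PosSemidef) (hρ2 : ρ2.PosSemidef) (hρ : ρ.PosDef) :
    ((((hρ.posSemidef.sqrt)⁻¹ * ((1/2 : ℂ) • ρ1) * (hρ.posSemidef.sqrt)⁻¹ *
          ((1/2 : ℂ) • ρ1)).trace).re +
        (((hρ.posSemidef.sqrt)⁻¹ * ((1/2 : ℂ) • ρ2) * (hρ.posSemidef.sqrt)⁻¹ *
          ((1/2 : ℂ) • ρ2)).trace).re = 3/4) ∧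
    ((1/4 : ℝ) / ((1/2) * fid hρ1 hρ1 + (1/2) * fid hρ1 hρ2) +
        (1/4 : ℝ) / ((1/2) * fid hρ2 hρ1 + (1/2) * fid hρ2 hρ2) = 4/5) ∧
    ((((hρ.posSemidef.sqrt)⁻¹ * ((1/2 : ℂ) • ρ1) * (hρ.posSemidef.sqrt)⁻¹ *
          ((1/2 : ℂ) • ρ1)).trace).re +
        (((hρ.posSemidef.sqrt)⁻¹ * ((1/2 : ℂ) • ρ2) * (hρ.posSemidef.sqrt)⁻¹ *
          ((1/2 : ℂ) • ρ2)).trace).re <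
      (1/4 : ℝ) / ((1/2) * fid hρ1 hρ1 + (1/2) * fid hρ1 hρ2) +
        (1/4 : ℝ) / ((1/2) * fid hρ2 hρ1 + (1/2) * fid hρ2 hρ2)) := by
  have hs2 : (Real.sqrt 2 : ℂ) * (Real.sqrt 2 : ℂ) = 2 := by
    rw [← Complex.ofReal_mul, Real.mul_self_sqrt (by norm_num)]; norm_num
  set s : ℂ := (Real.sqrt 2 : ℂ) with hs
  have hs0 : (0:ℂ) ≤ s / 2 := by
    rw [hs, show ((√2 : ℝ):ℂ)/2 = ((√2/2 : ℝ):ℂ) by push_cast; ring]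
    exact cnn' _ (by positivity)
  have hhalf : (0:ℂ) ≤ 1/2 := by
    rw [show ((1:ℂ)/2) = ((1/2 : ℝ):ℂ) by push_cast; ring]
    exact cnn' _ (by norm_num)
  have hρd : ρ = diagonal ![1/2, 1/4, 1/4] := by
    rw [hρdef, hρ1def, hρ2def]
    ext i j
    fin_cases i <;> fin_cases j <;> simp [Matrix.diagonal] <;> norm_num
  have hsρ : hρ.posSemidef.sqrt = diagonal ![s/2, 1/2, 1/2] := by
    refine sqrt_eq_diagonal' _ _ _ hρd ?_ ?_
    · intro i; fin_cases i
      · simpa using hs0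
      · simpa using hhalf
      · simpa using hhalf
    · intro i; fin_cases i
      · simpa using by linear_combination (1/4 : ℂ) * hs2
      · norm_num
      · norm_num
  have hsne : s ≠ 0 := by
    intro h0; rw [h0] at hs2; norm_num at hs2
  have hinv : (hρ.posSemidef.sqrt)⁻¹ = diagonal ![s, 2, 2] := by
    rw [hsρ]
    refine inv_eq_left_inv ?_
    rw [diagonal_mul_diagonal, ← diagonal_one]
    refine congrArg diagonal (funext fun i => ?_)
    fin_cases i
    · simpa using by field_simp; linear_combination hs2
    · norm_num
    · norm_num
  have h1 : (1/2 : ℂ) • ρ1 = diagonal ![1/4, 1/4, 0] := by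
    rw [hρ1def, ← diagonal_smul]
    refine congrArg diagonal (funext fun i => ?_)
    fin_cases i <;> norm_num
  have h2 : (1/2 : ℂ) • ρ2 = diagonal ![1/4, 0, 1/4] := by
    rw [hρ2def, ← diagonal_smul]
    refine congrArg diagonal (funext fun i => ?_)
    fin_cases i <;> norm_num
  have ht1 : (((hρ.posSemidef.sqrt)⁻¹ * ((1/2 : ℂ) • ρ1) * (hρ.posSemidef.sqrt)⁻¹ *
      ((1/2 : ℂ) • ρ1)).trace) = ((3/8 : ℝ) : ℂ) := by
    rw [hinv, h1, diagonal_mul_diagonal, diagonal_mul_diagonal, diagonal_mul_diagonal,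
      trace_diagonal, Fin.sum_univ_three]
    push_cast
    linear_combination (1/16 : ℂ) * hs2
  have ht2 : (((hρ.posSemidef.sqrt)⁻¹ * ((1/2 : ℂ) • ρ2) * (hρ.posSemidef.sqrt)⁻¹ *
      ((1/2 : ℂ) • ρ2)).trace) = ((3/8 : ℝ) : ℂ) := by
    rw [hinv, h2, diagonal_mul_diagonal, diagonal_mul_diagonal, diagonal_mul_diagonal,
      trace_diagonal, Fin.sum_univ_three]
    push_cast
    linear_combination (1/16 : ℂ) * hs2
  have hfirst : (((hρ.posSemidef.sqrt)⁻¹ * ((1/2 : ℂ) • ρ1) * (hρ.posSemidef.sqrt)⁻¹ *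
          ((1/2 : ℂ) • ρ1)).trace).re +
        (((hρ.posSemidef.sqrt)⁻¹ * ((1/2 : ℂ) • ρ2) * (hρ.posSemidef.sqrt)⁻¹ *
          ((1/2 : ℂ) • ρ2)).trace).re = 3/4 := by
    rw [ht1, ht2, Complex.ofReal_re]; norm_num
  -- square roots of the states
  have hsρ1 : hρ1.sqrt = diagonal ![s/2, s/2, 0] := by
    refine sqrt_eq_diagonal' _ _ _ hρ1def ?_ ?_
    · intro i; fin_cases i
      · simpa using hs0
      · simpa using hs0
      · simp
    · intro i; fin_cases i
      · simpa using by linear_combination (1/4 : ℂ) * hs2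
      · simpa using by linear_combination (1/4 : ℂ) * hs2
      · norm_num
  have hsρ2 : hρ2.sqrt = diagonal ![s/2, 0, s/2] := by
    refine sqrt_eq_diagonal' _ _ _ hρ2def ?_ ?_
    · intro i; fin_cases i
      · simpa using hs0
      · simp
      · simpa using hs0
    · intro i; fin_cases i
      · simpa using by linear_combination (1/4 : ℂ) * hs2
      · norm_num
      · simpa using by linear_combination (1/4 : ℂ) * hs2
  -- the four middle matrices
  have hM11 : hρ1.sqrt * ρ1 * hρ1.sqrt = diagonal ![1/4, 1/4, 0] := by
    rw [hsρ1, hρ1def, diagonal_mul_diagonal, diagonal_mul_diagonal]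
    refine congrArg diagonal (funext fun i => ?_)
    fin_cases i
    · simpa using by linear_combination (1/8 : ℂ) * hs2
    · simpa using by linear_combination (1/8 : ℂ) * hs2
    · norm_num
  have hM12 : hρ1.sqrt * ρ2 * hρ1.sqrt = diagonal ![1/4, 0, 0] := by
    rw [hsρ1, hρ2def, diagonal_mul_diagonal, diagonal_mul_diagonal]
    refine congrArg diagonal (funext fun i => ?_)
    fin_cases i
    · simpa using by linear_combination (1/8 : ℂ) * hs2
    · norm_num
    · norm_num
  have hM21 : hρ2.sqrt * ρ1 * hρ2.sqrt = diagonal ![1/4, 0, 0] := by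
    rw [hsρ2, hρ1def, diagonal_mul_diagonal, diagonal_mul_diagonal]
    refine congrArg diagonal (funext fun i => ?_)
    fin_cases i
    · simpa using by linear_combination (1/8 : ℂ) * hs2
    · norm_num
    · norm_num
  have hM22 : hρ2.sqrt * ρ2 * hρ2.sqrt = diagonal ![1/4, 0, 1/4] := by
    rw [hsρ2, hρ2def, diagonal_mul_diagonal, diagonal_mul_diagonal]
    refine congrArg diagonal (funext fun i => ?_)
    fin_cases i
    · simpa using by linear_combination (1/8 : ℂ) * hs2
    · norm_num
    · simpa using by linear_combination (1/8 : ℂ) * hs2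
  -- fidelities
  have hwA : (0 : Fin 3 → ℂ) ≤ ![1/2, 1/2, 0] := by
    intro i; fin_cases i
    · simpa using hhalf
    · simpa using hhalf
    · simp
  have hwB : (0 : Fin 3 → ℂ) ≤ ![1/2, 0, 0] := by
    intro i; fin_cases i
    · simpa using hhalf
    · simp
    · simp
  have hwC : (0 : Fin 3 → ℂ) ≤ ![1/2, 0, 1/2] := by
    intro i; fin_cases i
    · simpa using hhalf
    · simp
    · simpa using hhalf
  have f11 : fid hρ1 hρ1 = 1 := by
    have e : (sqrt_mul_mul_sqrt_posSemidef hρ1 hρ1).sqrt = diagonal ![1/2, 1/2, 0] := by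
      refine sqrt_eq_diagonal' _ _ _ hM11 hwA ?_
      intro i; fin_cases i <;> norm_num
    unfold fid
    have tr : (diagonal ![(1:ℂ)/2, 1/2, 0]).trace = ((1:ℝ):ℂ) := by
      rw [trace_diagonal, Fin.sum_univ_three]; push_cast; norm_num
    rw [e, tr, Complex.ofReal_re]; norm_num
  have f12 : fid hρ1 hρ2 = 1/4 := by
    have e : (sqrt_mul_mul_sqrt_posSemidef hρ1 hρ2).sqrt = diagonal ![1/2, 0, 0] := by
      refine sqrt_eq_diagonal' _ _ _ hM12 hwB ?_
      intro i; fin_cases i <;> norm_num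
    unfold fid
    have tr : (diagonal ![(1:ℂ)/2, 0, 0]).trace = ((1/2:ℝ):ℂ) := by
      rw [trace_diagonal, Fin.sum_univ_three]; push_cast; norm_num
    rw [e, tr, Complex.ofReal_re]; norm_num
  have f21 : fid hρ2 hρ1 = 1/4 := by
    have e : (sqrt_mul_mul_sqrt_posSemidef hρ2 hρ1).sqrt = diagonal ![1/2, 0, 0] := by
      refine sqrt_eq_diagonal' _ _ _ hM21 hwB ?_
      intro i; fin_cases i <;> norm_num
    unfold fid
    have tr : (diagonal ![(1:ℂ)/2, 0, 0]).trace = ((1/2:ℝ):ℂ) := by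
      rw [trace_diagonal, Fin.sum_univ_three]; push_cast; norm_num
    rw [e, tr, Complex.ofReal_re]; norm_num
  have f22 : fid hρ2 hρ2 = 1 := by
    have e : (sqrt_mul_mul_sqrt_posSemidef hρ2 hρ2).sqrt = diagonal ![1/2, 0, 1/2] := by
      refine sqrt_eq_diagonal' _ _ _ hM22 hwC ?_
      intro i; fin_cases i <;> norm_num
    unfold fid
    have tr : (diagonal ![(1:ℂ)/2, 0, 1/2]).trace = ((1:ℝ):ℂ) := by
      rw [trace_diagonal, Fin.sum_univ_three]; push_cast; norm_num
    rw [e, tr, Complex.ofReal_re]; norm_num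
  have hsecond : (1/4 : ℝ) / ((1/2) * fid hρ1 hρ1 + (1/2) * fid hρ1 hρ2) +
      (1/4 : ℝ) / ((1/2) * fid hρ2 hρ1 + (1/2) * fid hρ2 hρ2) = 4/5 := by
    rw [f11, f12, f21, f22]; norm_num
  exact ⟨hfirst, hsecond, by rw [hfirst, hsecond]; norm_num⟩
end
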